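/- The set S₁ × [4] ⊆ ℤ³, where S₁ = {(1,1),(1,2),(2,2)} and [4] = {1,2,3,4}, can be partitioned into three 4-element subsets B of ℤ³ each of which can be ordered as v₁,v₂,v₃,v₄ so that the multiset of consecutive differences {v₂−v₁, v₃−v₂, v₄−v₃} equals {(1,0,0),(0,1,0),(0,0,1)}. -/

import Mathlib

private lemma ncard4 {α : Type*} [DecidableEq α] (a b c d : α)
    (h : ({a,b,c,d} : Finset α).card = 4) : ({a,b,c,d} : Set α).ncard = 4 := by
  rw [show ({a,b,c,d} : Set α) = (↑({a,b,c,d} : Finset α) : Set α) by simp,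
    Set.ncard_coe_finset, h]

/-- S₁ × [4] with S₁ = {(1,1),(1,2),(2,2)} can be partitioned into
three (e₁,e₂,e₃)-blocks. -/
theorem stmt_0 :
    ∃ B : Fin 3 → Set (ℤ × ℤ × ℤ),
      (∀ i, ∃ v₁ v₂ v₃ v₄ : ℤ × ℤ × ℤ,
        B i = {v₁, v₂, v₃, v₄} ∧ (B i).ncard = 4 ∧
        ({v₂ - v₁, v₃ - v₂, v₄ - v₃} : Multiset (ℤ × ℤ × ℤ)) =
          {(1,0,0), (0,1,0), (0,0,1)}) ∧
      (∀ i j, i ≠ j → Disjoint (B i) (B j)) ∧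
      (⋃ i, B i) = {v : ℤ × ℤ × ℤ |
        (v.1, v.2.1) ∈ ({(1,1),(1,2),(2,2)} : Set (ℤ × ℤ)) ∧ v.2.2 ∈ Set.Icc (1:ℤ) 4} := by
  refine ⟨![{(1,1,1),(1,2,1),(2,2,1),(2,2,2)},
            {(1,1,2),(1,2,2),(1,2,3),(2,2,3)},
            {(1,1,3),(1,1,4),(1,2,4),(2,2,4)}], ?_, ?_, ?_⟩
  · intro i
    fin_cases i
    · exact ⟨(1,1,1),(1,2,1),(2,2,1),(2,2,2), rfl, ncard4 _ _ _ _ (by decide), by decide⟩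
    · exact ⟨(1,1,2),(1,2,2),(1,2,3),(2,2,3), rfl, ncard4 _ _ _ _ (by decide), by decide⟩
    · exact ⟨(1,1,3),(1,1,4),(1,2,4),(2,2,4), rfl, ncard4 _ _ _ _ (by decide), by decide⟩
  · intro i j hij
    fin_cases i <;> fin_cases j <;>
      first
        | exact absurd rfl hij
        | (rw [Set.disjoint_left]; rintro ⟨x,y,z⟩ h1 h2; simp_all [Prod.ext_iff]; omega)
  · ext ⟨x, y, z⟩
    simp only [Set.mem_iUnion, Set.mem_setOf_eq, Set.mem_insert_iff, Set.mem_singleton_iff,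
      Set.mem_Icc, Prod.mk.injEq]
    constructor
    · rintro ⟨i, h⟩
      fin_cases i <;> simp_all [Prod.ext_iff] <;> omega
    · rintro ⟨h1, h2, h3⟩
      have hz : z = 1 ∨ z = 2 ∨ z = 3 ∨ z = 4 := by omega
      rcases h1 with ⟨hx,hy⟩|⟨hx,hy⟩|⟨hx,hy⟩ <;> subst hx <;> subst hy <;>
        rcases hz with rfl|rfl|rfl|rfl
      · exact ⟨0, by norm_num⟩
      · exact ⟨1, by norm_num⟩
      · exact ⟨2, Or.inl rfl⟩
      · exact ⟨2, Or.inr (Or.inl rfl)⟩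
      · exact ⟨0, by norm_num⟩
      · exact ⟨1, by norm_num⟩
      · exact ⟨1, by norm_num⟩
      · exact ⟨2, Or.inr (Or.inr (Or.inl rfl))⟩
      · exact ⟨0, by norm_num⟩
      · exact ⟨0, by norm_num⟩
      · exact ⟨1, by norm_num⟩
      · exact ⟨2, Or.inr (Or.inr (Or.inr rfl))⟩
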